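/- Work with a deterministic finite-horizon MDP: S is a finite type of states, 𝒜 is a finite type of actions, f : S → 𝒜 → S is a deterministic transition function, r : S → 𝒜 → ℝ is a reward function, T ⊆ S is a set of terminal states, and there is a height function h : S → ℕ with h(s) = 0 if and only if s ∈ T and h(f(s,a)) < h(s) for every non-terminal s and every action a. Let β > 0 and let π_ref be a policy with π_ref(a|s) > 0 for all s, a. Let ν_S : S → ℝ satisfy ν_S(s) > 0 for every non-terminal s, and for each non-terminal s let ν_A(·|s) be a probability mass function on 𝒜 with ν_A(a|s) > 0 for all a. Suppose the policy π⁺, with π⁺(a|s) > 0 for all s, a, minimizes L(π) = (1/2)·∑_{s non-terminal} ν_S(s)·∑_a ν_A(a|s)·(A^{π_ref}(s,a)/β − log(π(a|s)/π_ref(a|s)))² over all policies π with π(a|s) > 0 for all s, a. Then for every initial distribution μ on S, V_β^{π⁺}(μ) ≥ V_β^{π_ref}(μ). -/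

import Mathlib

/-- Unregularized value of a policy in a deterministic finite-horizon MDP,
defined by recursion on the height function `h`. -/
noncomputable def Vpol {S 𝒜 : Type*} [Fintype 𝒜] (f : S → 𝒜 → S) (r : S → 𝒜 → ℝ)
    (T : Set S) [DecidablePred (· ∈ T)] (h : S → ℕ)
    (hdec : ∀ s ∉ T, ∀ a, h (f s a) < h s)
    (π : S → 𝒜 → ℝ) (s : S) : ℝ :=
  if s ∈ T then 0
  else ∑ a, π s a * (r s a + Vpol f r T h hdec π (f s a))
termination_by h s
decreasing_by exact hdec s (by assumption) _

/-- KL-regularized value (w.r.t. the reference policy `πref`) of a policy in a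
deterministic finite-horizon MDP, defined by recursion on the height function `h`. -/
noncomputable def Vbeta {S 𝒜 : Type*} [Fintype 𝒜] (f : S → 𝒜 → S) (r : S → 𝒜 → ℝ)
    (T : Set S) [DecidablePred (· ∈ T)] (h : S → ℕ)
    (hdec : ∀ s ∉ T, ∀ a, h (f s a) < h s)
    (β : ℝ) (πref π : S → 𝒜 → ℝ) (s : S) : ℝ :=
  if s ∈ T then 0
  else ∑ a, π s a *
    (r s a + Vbeta f r T h hdec β πref π (f s a) - β * Real.log (π s a / πref s a))
termination_by h s
decreasing_by exact hdec s (by assumption) _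

open Finset in
lemma dapo_core {𝒜 : Type*} [Fintype 𝒜] (c ν q p : 𝒜 → ℝ)
    (hν : ∀ a, 0 < ν a) (hq : ∀ a, 0 < q a) (hqs : ∑ a, q a = 1)
    (hc : ∑ a, q a * c a = 0)
    (hp : ∀ a, 0 < p a) (hps : ∑ a, p a = 1)
    (hmin : ∀ p' : 𝒜 → ℝ, (∀ a, 0 < p' a) → (∑ a, p' a = 1) →
      ∑ a, ν a * (c a - Real.log (p a / q a)) ^ 2 ≤
      ∑ a, ν a * (c a - Real.log (p' a / q a)) ^ 2) :
    0 ≤ ∑ a, p a * (c a - Real.log (p a / q a)) := by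
  classical
  have hne : Nonempty 𝒜 := by
    by_contra hE
    rw [not_nonempty_iff] at hE
    simp [Finset.univ_eq_empty] at hps
  set δ : 𝒜 → ℝ := fun a => c a - Real.log (p a / q a) with hδdef
  set ρ : 𝒜 → ℝ := fun a => ν a * δ a / p a with hρdef
  -- stationarity
  have hstat : ∀ a b : 𝒜, ρ a = ρ b := by
    intro a b
    rcases eq_or_ne a b with rfl | hab
    · rfl
    set v : 𝒜 → ℝ := fun x => (if x = a then (1:ℝ) else 0) - (if x = b then 1 else 0) with hv
    have hvsum : ∑ x, v x = 0 := by
      simp [hv, Finset.sum_sub_distrib]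
    have hvabs : ∀ x, |v x| ≤ 1 := by
      intro x; simp only [hv]; split_ifs <;> norm_num
    obtain ⟨a₀⟩ := hne
    set ε : ℝ := Finset.univ.inf' (show (Finset.univ : Finset 𝒜).Nonempty from ⟨a₀, mem_univ a₀⟩) p with hε
    have hεpos : 0 < ε := by
      rw [hε, Finset.lt_inf'_iff]
      exact fun x _ => hp x
    have hεle : ∀ x, ε ≤ p x := fun x => Finset.inf'_le _ (mem_univ x)
    set φ : ℝ → ℝ := fun t => ∑ x, ν x * (c x - (Real.log (p x + t * v x) - Real.log (q x))) ^ 2 with hφ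
    have hφeq : ∀ t : ℝ, (∀ x, 0 < p x + t * v x) →
        φ t = ∑ x, ν x * (c x - Real.log ((p x + t * v x) / q x)) ^ 2 := by
      intro t ht
      refine Finset.sum_congr rfl fun x _ => ?_
      rw [Real.log_div (ht x).ne' (hq x).ne']
    have hφ0 : φ 0 = ∑ x, ν x * (c x - Real.log (p x / q x)) ^ 2 := by
      have := hφeq 0 (fun x => by simpa using hp x)
      simpa using this
    have hlocmin : IsLocalMin φ 0 := by
      filter_upwards [Metric.ball_mem_nhds (0:ℝ) hεpos] with t ht
      have htabs : |t| < ε := by simpa [Real.dist_eq] using ht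
      have hpos : ∀ x, 0 < p x + t * v x := by
        intro x
        have h1 : |t * v x| ≤ |t| := by
          rw [abs_mul]
          nlinarith [hvabs x, abs_nonneg t]
        have h2 : -(t * v x) ≤ |t| := (neg_le_abs _).trans h1
        have := hεle x
        linarith
      have hsum : ∑ x, (p x + t * v x) = 1 := by
        rw [Finset.sum_add_distrib, hps]
        simp [← Finset.mul_sum, hvsum]
      rw [hφ0, hφeq t hpos]
      exact hmin _ hpos hsum
    -- derivative
    have hder : HasDerivAt φ
        (∑ x, ν x * ((2:ℕ) * (c x - (Real.log (p x + 0 * v x) - Real.log (q x))) ^ 1 *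
          (-(v x / (p x + 0 * v x))))) 0 := by
      apply HasDerivAt.fun_sum
      intro x _
      have h1 : HasDerivAt (fun t : ℝ => p x + t * v x) (v x) 0 := by
        simpa using ((hasDerivAt_id (0:ℝ)).mul_const (v x)).const_add (p x)
      have h2 : HasDerivAt (fun t : ℝ => Real.log (p x + t * v x)) (v x / (p x + 0 * v x)) 0 := by
        exact h1.log (by simpa using (hp x).ne')
      have h3 : HasDerivAt (fun t : ℝ => c x - (Real.log (p x + t * v x) - Real.log (q x)))
          (-(v x / (p x + 0 * v x))) 0 := (h2.sub_const (Real.log (q x))).const_sub (c x)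
      exact (h3.pow 2).const_mul (ν x)
    have hD0 := hlocmin.hasDerivAt_eq_zero hder
    have hterm : ∀ x, ν x * ((2:ℕ) * (c x - (Real.log (p x + 0 * v x) - Real.log (q x))) ^ 1 *
          (-(v x / (p x + 0 * v x)))) = (-2 * ρ x) * v x := by
      intro x
      have hlog : Real.log (p x + 0 * v x) - Real.log (q x) = Real.log (p x / q x) := by
        rw [zero_mul, add_zero, Real.log_div (hp x).ne' (hq x).ne']
      rw [hlog]
      simp only [zero_mul, add_zero, pow_one, hρdef, hδdef]
      field_simp
      ring
    rw [Finset.sum_congr rfl (fun x _ => hterm x)] at hD0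
    have : ∑ x, (-2 * ρ x) * v x = -2 * ρ a - (-2 * ρ b) := by
      simp only [hv, mul_sub, mul_ite, mul_one, mul_zero]
      rw [Finset.sum_sub_distrib, Finset.sum_ite_eq' Finset.univ a (fun x => -2 * ρ x),
        Finset.sum_ite_eq' Finset.univ b (fun x => -2 * ρ x)]
      simp
    rw [this] at hD0
    linarith
  obtain ⟨a₀⟩ := hne
  set lam : ℝ := ρ a₀ with hlam
  have hδeq : ∀ x, δ x = lam * p x / ν x := by
    intro x
    have h := hstat x a₀
    rw [hρdef] at h
    simp only at h
    show δ x = ν a₀ * δ a₀ / p a₀ * p x / ν x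
    field_simp [← h]
    rw [eq_div_iff (mul_pos (hp a₀) (hν x)).ne']
    rw [div_eq_div_iff (hp x).ne' (hp a₀).ne'] at h
    linear_combination h
  have hlamnn : 0 ≤ lam := by
    by_contra hneg
    push_neg at hneg
    have hδneg : ∀ x, δ x < 0 := by
      intro x
      rw [hδeq x]
      exact div_neg_of_neg_of_pos (mul_neg_of_neg_of_pos hneg (hp x)) (hν x)
    have h1 : ∑ x, q x * c x < ∑ x, q x * Real.log (p x / q x) := by
      apply Finset.sum_lt_sum_of_nonempty ⟨a₀, mem_univ a₀⟩
      intro x _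
      have hd : c x - Real.log (p x / q x) < 0 := hδneg x
      nlinarith [hq x]
    have h2 : ∑ x, q x * Real.log (p x / q x) ≤ ∑ x, q x * (p x / q x - 1) :=
      Finset.sum_le_sum fun x _ =>
        mul_le_mul_of_nonneg_left (Real.log_le_sub_one_of_pos (div_pos (hp x) (hq x))) (hq x).le
    have h3 : ∑ x, q x * (p x / q x - 1) = 0 := by
      rw [Finset.sum_congr rfl (fun x _ => by rw [mul_sub, mul_one, mul_div_cancel₀ _ (hq x).ne'] : ∀ x ∈ Finset.univ, q x * (p x / q x - 1) = p x - q x)]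
      rw [Finset.sum_sub_distrib, hps, hqs]
      ring
    rw [hc] at h1
    linarith
  apply Finset.sum_nonneg
  intro x _
  have : 0 ≤ δ x := by
    rw [hδeq x]
    exact div_nonneg (mul_nonneg hlamnn (hp x).le) (hν x).le
  exact mul_nonneg (hp x).le this

lemma Vpol_nonterm {S 𝒜 : Type*} [Fintype 𝒜] (f : S → 𝒜 → S) (r : S → 𝒜 → ℝ)
    (T : Set S) [DecidablePred (· ∈ T)] (h : S → ℕ)
    (hdec : ∀ s ∉ T, ∀ a, h (f s a) < h s)
    (π : S → 𝒜 → ℝ) (s : S) (hs : s ∉ T) :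
    Vpol f r T h hdec π s = ∑ a, π s a * (r s a + Vpol f r T h hdec π (f s a)) := by
  conv_lhs => rw [Vpol]
  rw [if_neg hs]

lemma Vbeta_nonterm {S 𝒜 : Type*} [Fintype 𝒜] (f : S → 𝒜 → S) (r : S → 𝒜 → ℝ)
    (T : Set S) [DecidablePred (· ∈ T)] (h : S → ℕ)
    (hdec : ∀ s ∉ T, ∀ a, h (f s a) < h s) (β : ℝ)
    (πref π : S → 𝒜 → ℝ) (s : S) (hs : s ∉ T) :
    Vbeta f r T h hdec β πref π s = ∑ a, π s a *
      (r s a + Vbeta f r T h hdec β πref π (f s a) - β * Real.log (π s a / πref s a)) := by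
  conv_lhs => rw [Vbeta]
  rw [if_neg hs]

lemma Vbeta_ref_eq {S 𝒜 : Type*} [Fintype 𝒜] (f : S → 𝒜 → S) (r : S → 𝒜 → ℝ)
    (T : Set S) [DecidablePred (· ∈ T)] (h : S → ℕ)
    (hdec : ∀ s ∉ T, ∀ a, h (f s a) < h s) (β : ℝ)
    (πref : S → 𝒜 → ℝ) (hrefpos : ∀ s a, 0 < πref s a) (s : S) :
    Vbeta f r T h hdec β πref πref s = Vpol f r T h hdec πref s := by
  suffices H : ∀ n : ℕ, ∀ s : S, h s < n →
      Vbeta f r T h hdec β πref πref s = Vpol f r T h hdec πref s from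
    H (h s + 1) s (Nat.lt_succ_self _)
  intro n
  induction n with
  | zero => exact fun s hs => absurd hs (Nat.not_lt_zero _)
  | succ n ih =>
    intro s hs
    by_cases hsT : s ∈ T
    · rw [Vbeta, Vpol, if_pos hsT, if_pos hsT]
    · rw [Vbeta_nonterm f r T h hdec β πref πref s hsT, Vpol_nonterm f r T h hdec πref s hsT]
      refine Finset.sum_congr rfl fun a _ => ?_
      rw [ih (f s a) (by have := hdec s hsT a; omega),
        div_self (hrefpos s a).ne', Real.log_one]
      ring

lemma Vbeta_improve {S 𝒜 : Type*} [Fintype 𝒜] (f : S → 𝒜 → S) (r : S → 𝒜 → ℝ)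
    (T : Set S) [DecidablePred (· ∈ T)] (h : S → ℕ)
    (hdec : ∀ s ∉ T, ∀ a, h (f s a) < h s) (β : ℝ)
    (πref πplus : S → 𝒜 → ℝ)
    (hpluspos : ∀ s a, 0 < πplus s a) (hplussum : ∀ s, ∑ a, πplus s a = 1)
    (hstate : ∀ s ∉ T, 0 ≤ ∑ a, πplus s a *
      (r s a + Vpol f r T h hdec πref (f s a) - Vpol f r T h hdec πref s
        - β * Real.log (πplus s a / πref s a))) (s : S) :
    Vpol f r T h hdec πref s ≤ Vbeta f r T h hdec β πref πplus s := by
  suffices H : ∀ n : ℕ, ∀ s : S, h s < n →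
      Vpol f r T h hdec πref s ≤ Vbeta f r T h hdec β πref πplus s from
    H (h s + 1) s (Nat.lt_succ_self _)
  intro n
  induction n with
  | zero => exact fun s hs => absurd hs (Nat.not_lt_zero _)
  | succ n ih =>
    intro s hs
    by_cases hsT : s ∈ T
    · rw [Vbeta, Vpol, if_pos hsT, if_pos hsT]
    · rw [Vbeta_nonterm f r T h hdec β πref πplus s hsT]
      have h1 : ∑ a, πplus s a * (r s a + Vpol f r T h hdec πref (f s a)
            - β * Real.log (πplus s a / πref s a)) ≤
          ∑ a, πplus s a * (r s a + Vbeta f r T h hdec β πref πplus (f s a)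
            - β * Real.log (πplus s a / πref s a)) := by
        refine Finset.sum_le_sum fun a _ => ?_
        refine mul_le_mul_of_nonneg_left ?_ (hpluspos s a).le
        have := ih (f s a) (by have := hdec s hsT a; omega)
        linarith
      have h2 : ∑ a, πplus s a * (r s a + Vpol f r T h hdec πref (f s a)
            - β * Real.log (πplus s a / πref s a)) =
          (∑ a, πplus s a * (r s a + Vpol f r T h hdec πref (f s a)
            - Vpol f r T h hdec πref s - β * Real.log (πplus s a / πref s a)))
            + Vpol f r T h hdec πref s := by
        rw [Finset.sum_congr rfl (fun a _ => by ring :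
          ∀ a ∈ Finset.univ, πplus s a * (r s a + Vpol f r T h hdec πref (f s a)
            - β * Real.log (πplus s a / πref s a)) =
          πplus s a * (r s a + Vpol f r T h hdec πref (f s a)
            - Vpol f r T h hdec πref s - β * Real.log (πplus s a / πref s a))
            + πplus s a * Vpol f r T h hdec πref s)]
        rw [Finset.sum_add_distrib, ← Finset.sum_mul, hplussum s, one_mul]
      linarith [hstate s hsT]

/-- **Theorem 1 (monotonic improvement).** The solution of the exact DAPO
least-squares objective under exploratory state and action sampling distributions
has KL-regularized value at least that of the reference policy. -/
theorem dapo_monotonic_improvement {S 𝒜 : Type*} [Fintype S] [Fintype 𝒜]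
    (f : S → 𝒜 → S) (r : S → 𝒜 → ℝ)
    (T : Set S) [DecidablePred (· ∈ T)] (h : S → ℕ)
    (hT : ∀ s, h s = 0 ↔ s ∈ T)
    (hdec : ∀ s ∉ T, ∀ a, h (f s a) < h s)
    (β : ℝ) (hβ : 0 < β)
    (πref : S → 𝒜 → ℝ)
    (hrefpos : ∀ s a, 0 < πref s a) (hrefsum : ∀ s, ∑ a, πref s a = 1)
    (νS : S → ℝ) (hνS : ∀ s ∉ T, 0 < νS s)
    (νA : S → 𝒜 → ℝ)
    (hνApos : ∀ s ∉ T, ∀ a, 0 < νA s a) (hνAsum : ∀ s ∉ T, ∑ a, νA s a = 1)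
    (πplus : S → 𝒜 → ℝ)
    (hpluspos : ∀ s a, 0 < πplus s a) (hplussum : ∀ s, ∑ a, πplus s a = 1)
    (hmin : ∀ π : S → 𝒜 → ℝ, (∀ s a, 0 < π s a) → (∀ s, ∑ a, π s a = 1) →
      (1 / 2) * ∑ s ∈ Finset.univ.filter (fun s => s ∉ T), νS s *
          ∑ a, νA s a *
            ((r s a + Vpol f r T h hdec πref (f s a) - Vpol f r T h hdec πref s) / β
              - Real.log (πplus s a / πref s a)) ^ 2 ≤
        (1 / 2) * ∑ s ∈ Finset.univ.filter (fun s => s ∉ T), νS s *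
          ∑ a, νA s a *
            ((r s a + Vpol f r T h hdec πref (f s a) - Vpol f r T h hdec πref s) / β
              - Real.log (π s a / πref s a)) ^ 2) :
    ∀ μ : S → ℝ, (∀ s, 0 ≤ μ s) → ∑ s, μ s = 1 →
      ∑ s, μ s * Vbeta f r T h hdec β πref πref s ≤
        ∑ s, μ s * Vbeta f r T h hdec β πref πplus s := by
  classical
  have key : ∀ s ∉ T, 0 ≤ ∑ a, πplus s a *
      (r s a + Vpol f r T h hdec πref (f s a) - Vpol f r T h hdec πref s
        - β * Real.log (πplus s a / πref s a)) := by
    intro s hsT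
    have hmin_s : ∀ p : 𝒜 → ℝ, (∀ a, 0 < p a) → (∑ a, p a = 1) →
        ∑ a, νA s a * ((r s a + Vpol f r T h hdec πref (f s a) - Vpol f r T h hdec πref s) / β
          - Real.log (πplus s a / πref s a)) ^ 2 ≤
        ∑ a, νA s a * ((r s a + Vpol f r T h hdec πref (f s a) - Vpol f r T h hdec πref s) / β
          - Real.log (p a / πref s a)) ^ 2 := by
      intro p hppos hpsum
      set π : S → 𝒜 → ℝ := fun s' => if s' = s then p else πplus s' with hπ
      have hπpos : ∀ s' a, 0 < π s' a := by
        intro s' a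
        simp only [hπ]
        split_ifs
        exacts [hppos a, hpluspos s' a]
      have hπsum : ∀ s', ∑ a, π s' a = 1 := by
        intro s'
        simp only [hπ]
        split_ifs
        exacts [hpsum, hplussum s']
      have H := hmin π hπpos hπsum
      set t : Finset S := Finset.univ.filter (fun s => s ∉ T) with ht
      have hsmem : s ∈ t := Finset.mem_filter.2 ⟨Finset.mem_univ s, hsT⟩
      rw [← Finset.sum_erase_add t _ hsmem, ← Finset.sum_erase_add t _ hsmem] at H
      have hrest : ∑ s' ∈ t.erase s, νS s' *
            ∑ a, νA s' a *
              ((r s' a + Vpol f r T h hdec πref (f s' a) - Vpol f r T h hdec πref s') / β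
                - Real.log (π s' a / πref s' a)) ^ 2 =
          ∑ s' ∈ t.erase s, νS s' *
            ∑ a, νA s' a *
              ((r s' a + Vpol f r T h hdec πref (f s' a) - Vpol f r T h hdec πref s') / β
                - Real.log (πplus s' a / πref s' a)) ^ 2 := by
        refine Finset.sum_congr rfl fun s' hs' => ?_
        have hne : s' ≠ s := Finset.ne_of_mem_erase hs'
        simp only [hπ, if_neg hne]
      rw [hrest] at H
      have hmul : νS s * ∑ a, νA s a *
            ((r s a + Vpol f r T h hdec πref (f s a) - Vpol f r T h hdec πref s) / β
              - Real.log (πplus s a / πref s a)) ^ 2 ≤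
          νS s * ∑ a, νA s a *
            ((r s a + Vpol f r T h hdec πref (f s a) - Vpol f r T h hdec πref s) / β
              - Real.log (π s a / πref s a)) ^ 2 := by
        linarith
      have hπs : ∀ a, π s a = p a := by
        intro a
        simp only [hπ, if_pos rfl]
      simp only [hπs] at hmul
      exact le_of_mul_le_mul_left hmul (hνS s hsT)
    have hc : ∑ a, πref s a *
        ((r s a + Vpol f r T h hdec πref (f s a) - Vpol f r T h hdec πref s) / β) = 0 := by
      have hVs := Vpol_nonterm f r T h hdec πref s hsT
      rw [Finset.sum_congr rfl (fun a _ => by ring :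
        ∀ a ∈ Finset.univ, πref s a *
          ((r s a + Vpol f r T h hdec πref (f s a) - Vpol f r T h hdec πref s) / β)
          = (πref s a * (r s a + Vpol f r T h hdec πref (f s a))) / β
            - (πref s a * Vpol f r T h hdec πref s) / β)]
      rw [Finset.sum_sub_distrib, ← Finset.sum_div, ← Finset.sum_div, ← hVs,
        ← Finset.sum_mul, hrefsum s, one_mul, sub_self]
    have hcore := dapo_core
      (fun a => (r s a + Vpol f r T h hdec πref (f s a) - Vpol f r T h hdec πref s) / β)
      (νA s) (πref s) (πplus s) (hνApos s hsT) (hrefpos s) (hrefsum s) hc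
      (hpluspos s) (hplussum s) hmin_s
    have hconv : ∀ a ∈ Finset.univ, πplus s a *
        (r s a + Vpol f r T h hdec πref (f s a) - Vpol f r T h hdec πref s
          - β * Real.log (πplus s a / πref s a)) =
        β * (πplus s a *
          ((r s a + Vpol f r T h hdec πref (f s a) - Vpol f r T h hdec πref s) / β
            - Real.log (πplus s a / πref s a))) := by
      intro a _
      field_simp
    rw [Finset.sum_congr rfl hconv, ← Finset.mul_sum]
    exact mul_nonneg hβ.le hcore
  intro μ hμ hμsum
  refine Finset.sum_le_sum fun s _ => mul_le_mul_of_nonneg_left ?_ (hμ s)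
  rw [Vbeta_ref_eq f r T h hdec β πref hrefpos s]
  exact Vbeta_improve f r T h hdec β πref πplus hpluspos hplussum key s
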